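/- Let m ≥ 1 be an integer, set C = 2·cos(mπ/3) and ε = (−1)^m. Suppose λ ∈ ℝ satisfies the quadratic equation (4 + 3εC³)·λ² + (2C + (1−ε)C³ − 4)·λ − (C − 1) = 0 and ((1−ε) + 2ελ)·λ ≥ 0. Then the triple (a_0, a_1, a_2) = ((1−2λ)/C, √(((1−ε) + 2ελ)·λ), λ) satisfies the N = 2 matching equations a_0 = C·a_1² + εC·a_2² + a_0², a_1 = 2a_1a_2 + C·a_0a_1, a_2 = εC·a_0a_2 + a_1². -/

import Mathlib

/-- for `m ≥ 1`, `C = 2·cos(mπ/3)`, `ε = (−1)^m`, and `λ` a real root of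
`(4 + 3εC³)·λ² + (2C + (1−ε)C³ − 4)·λ − (C−1) = 0` with `((1−ε) + 2ελ)·λ ≥ 0`, the
triple `(a₀, a₁, a₂) = ((1−2λ)/C, √(((1−ε) + 2ελ)·λ), λ)` satisfies the `N = 2`
matching equations. -/
theorem N2_matching_solution (m : ℕ) (hm : 1 ≤ m) (lam : ℝ)
    (C ε : ℝ) (hC : C = 2 * Real.cos ((m : ℝ) * Real.pi / 3)) (hε : ε = (-1 : ℝ) ^ m)
    (hquad : (4 + 3 * ε * C ^ 3) * lam ^ 2 + (2 * C + (1 - ε) * C ^ 3 - 4) * lam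
      - (C - 1) = 0)
    (hnonneg : 0 ≤ ((1 - ε) + 2 * ε * lam) * lam) :
    let a₀ : ℝ := (1 - 2 * lam) / C
    let a₁ : ℝ := Real.sqrt (((1 - ε) + 2 * ε * lam) * lam)
    let a₂ : ℝ := lam
    a₀ = C * a₁ ^ 2 + ε * C * a₂ ^ 2 + a₀ ^ 2 ∧
    a₁ = 2 * a₁ * a₂ + C * a₀ * a₁ ∧
    a₂ = ε * C * a₀ * a₂ + a₁ ^ 2 := by
  have hC0 : C ≠ 0 := by
    rw [hC]
    intro h
    have hcos : Real.cos ((m : ℝ) * Real.pi / 3) = 0 := by linarith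
    have h3 : Real.cos (3 * ((m : ℝ) * Real.pi / 3)) = 0 := by
      rw [Real.cos_three_mul, hcos]; ring
    have : (3 : ℝ) * ((m : ℝ) * Real.pi / 3) = (m : ℤ) * Real.pi := by push_cast; ring
    rw [this] at h3
    have := Real.abs_cos_int_mul_pi (m : ℤ)
    rw [h3] at this
    norm_num at this
  intro a₀ a₁ a₂
  have hsq : a₁ ^ 2 = ((1 - ε) + 2 * ε * lam) * lam := Real.sq_sqrt hnonneg
  refine ⟨?_, ?_, ?_⟩
  · show (1 - 2 * lam) / C = C * a₁ ^ 2 + ε * C * lam ^ 2 + ((1 - 2 * lam) / C) ^ 2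
    rw [hsq]
    field_simp
    linear_combination (-1) * hquad
  · show a₁ = 2 * a₁ * lam + C * ((1 - 2 * lam) / C) * a₁
    field_simp
    ring
  · show lam = ε * C * ((1 - 2 * lam) / C) * lam + a₁ ^ 2
    rw [hsq]
    field_simp
    ring
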